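/- For a finite set W ⊆ 𝕍 and an orbit 𝒪 of a nominal set X, there are only finitely many elements of 𝒪 whose least support is contained in W. -/

import Mathlib

open Pointwise

/-- The subgroup of finite permutations of the atoms `ℕ`. -/
def FinPerm : Subgroup (Equiv.Perm ℕ) where
  carrier := {π | {v | π v ≠ v}.Finite}
  one_mem' := by simp
  mul_mem' := by
    intro a b ha hb
    refine (ha.union hb).subset ?_
    intro v hv
    simp only [Set.mem_setOf_eq, Equiv.Perm.mul_apply] at hv
    by_contra h
    simp only [Set.mem_union, Set.mem_setOf_eq, not_or, not_not] at h
    rw [h.2] at hv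
    exact hv h.1
  inv_mem' := by
    intro a ha
    refine ha.subset ?_
    intro v hv
    simp only [Set.mem_setOf_eq] at hv ⊢
    intro h
    exact hv (by conv_lhs => rw [← h]; simp)


/-- Equivariant maps between `FinPerm`-sets. -/
def Equivariant {X Y : Type*} [MulAction FinPerm X] [MulAction FinPerm Y] (f : X → Y) : Prop :=
  ∀ (π : FinPerm) (x : X), f (π • x) = π • f x

/-- A finite set of atoms supports an element. -/
def Supports {X : Type*} [MulAction FinPerm X] (S : Finset ℕ) (x : X) : Prop :=
  ∀ π : FinPerm, (∀ v ∈ S, π • v = v) → π • x = x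

/-- A nominal set: a `FinPerm`-set with a least finite support function. -/
class NominalSet (X : Type*) [MulAction FinPerm X] where
  supp : X → Finset ℕ
  supports_supp : ∀ x : X, Supports (supp x) x
  supp_least : ∀ (x : X) (S : Finset ℕ), Supports S x → supp x ⊆ S

open NominalSet

lemma supports_smul_aux {X : Type*} [MulAction FinPerm X] {S : Finset ℕ} {x : X}
    (h : Supports S x) (π : FinPerm) :
    Supports (S.image (fun v => π • v)) (π • x) := by
  intro σ hσ
  have key : (π⁻¹ * σ * π) • x = x := by
    apply h
    intro v hv
    have hfix : σ • (π • v) = π • v := hσ _ (Finset.mem_image_of_mem _ hv)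
    simp [mul_smul, hfix]
  calc σ • π • x = π • (π⁻¹ * σ * π) • x := by simp [mul_smul]
    _ = π • x := by rw [key]

/-- For a finite set `W` of atoms and an orbit of a nominal set, only finitely many elements
of the orbit have least support contained in `W`. -/
theorem finite_supp_subset_in_orbit {X : Type*} [MulAction FinPerm X] [NominalSet X]
    (W : Finset ℕ) (x : X) :
    {y ∈ MulAction.orbit FinPerm x | supp y ⊆ W}.Finite := by
  classical
  rw [← Set.finite_coe_iff]
  set S := {y ∈ MulAction.orbit FinPerm x | supp y ⊆ W} with hS
  let pick : S → FinPerm := fun y => (MulAction.mem_orbit_iff.mp y.2.1).choose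
  have hpick : ∀ y : S, (pick y) • x = (y : X) :=
    fun y => (MulAction.mem_orbit_iff.mp y.2.1).choose_spec
  have hmap : ∀ (y : S) (v : ℕ), v ∈ supp x → (pick y) • v ∈ W := by
    intro y v hv
    have h1 : Supports ((supp ((pick y) • x)).image (fun w => (pick y)⁻¹ • w)) x := by
      have := supports_smul_aux (supports_supp ((pick y) • x)) (pick y)⁻¹
      simpa using this
    have h2 := supp_least x _ h1
    obtain ⟨w, hw, hw2⟩ := Finset.mem_image.mp (h2 hv)
    have hvw : (pick y) • v = w := by rw [← hw2]; simp
    rw [hpick y] at hw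
    rw [hvw]
    exact y.2.2 hw
  let g : S → ({v // v ∈ supp x} → {w // w ∈ W}) :=
    fun y v => ⟨(pick y) • (v : ℕ), hmap y v v.2⟩
  have hg : Function.Injective g := by
    intro y z h
    have agree : ∀ v ∈ supp x, ((pick z)⁻¹ * pick y) • v = v := by
      intro v hv
      have := congrFun h ⟨v, hv⟩
      have h' : (pick y) • v = (pick z) • v := congrArg Subtype.val this
      simp [mul_smul, h']
    have hx : ((pick z)⁻¹ * pick y) • x = x := supports_supp x _ agree
    have : (pick y) • x = (pick z) • x := by
      rw [mul_smul] at hx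
      calc (pick y) • x = (pick z) • ((pick z)⁻¹ • (pick y) • x) := by simp
        _ = (pick z) • x := by rw [hx]
    apply Subtype.ext
    rw [← hpick y, ← hpick z, this]
  exact Finite.of_injective g hg
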